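/- arXiv:1611.04902 — 2 statements merged into one kernel-verified Lean document; each statement's English description precedes it below -/
import Mathlib

section
/- The operator -L = k - Δ_p has an order-preserving inverse: if L f ≥ L g pointwise on V (equivalently -L f ≤ -L g), then f ≤ g pointwise. -/
open Finset Real

/-- The discrete `p`-Laplacian on a weighted graph with adjacency `A`,
edge weights `ω` and vertex measure `μ`:
`(Δ_p f)_i = (1/μ_i) Σ_{j ∼ i} ω_{ij} |f_j - f_i|^{p-2} (f_j - f_i)`. -/
noncomputable def pLap {V : Type*} [Fintype V] (p : ℝ) (A : V → V → Prop) [DecidableRel A]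
    (ω : V → V → ℝ) (μ : V → ℝ) (f : V → ℝ) : V → ℝ :=
  fun i => (1 / μ i) * ∑ j, if A i j then ω i j * |f j - f i| ^ (p - 2) * (f j - f i) else 0

/-- Sum of a symmetric function `g` over the (unordered) edges of the graph:
`Σ_{i∼j} g_{ij} = (1/2) Σ_i Σ_{j : A i j} g i j`. -/
noncomputable def edgeSum {V : Type*} [Fintype V] (A : V → V → Prop) [DecidableRel A]
    (g : V → V → ℝ) : ℝ :=
  (1 / 2) * ∑ i, ∑ j, if A i j then g i j else 0

lemma phi_mono (p : ℝ) (hp : 1 < p) {s t : ℝ} (hst : s ≤ t) :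
    |s| ^ (p - 2) * s ≤ |t| ^ (p - 2) * t := by
  have hp1 : (0:ℝ) ≤ p - 1 := by linarith
  rcases lt_or_ge 0 s with hs | hs
  · have ht : 0 < t := lt_of_lt_of_le hs hst
    rw [abs_of_pos hs, abs_of_pos ht]
    have e1 : s ^ (p - 2) * s = s ^ (p - 1) := by
      rw [show p - 1 = p - 2 + 1 by ring, Real.rpow_add_one hs.ne']
    have e2 : t ^ (p - 2) * t = t ^ (p - 1) := by
      rw [show p - 1 = p - 2 + 1 by ring, Real.rpow_add_one ht.ne']
    rw [e1, e2]
    exact Real.rpow_le_rpow hs.le hst hp1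
  · rcases lt_or_ge t 0 with ht | ht
    · have hs' : s < 0 := lt_of_le_of_lt hst ht
      rw [abs_of_neg hs', abs_of_neg ht]
      have e1 : (-s) ^ (p - 2) * s = -((-s) ^ (p - 1)) := by
        rw [show p - 1 = p - 2 + 1 by ring, Real.rpow_add_one (by linarith : (-s) ≠ 0)]
        ring
      have e2 : (-t) ^ (p - 2) * t = -((-t) ^ (p - 1)) := by
        rw [show p - 1 = p - 2 + 1 by ring, Real.rpow_add_one (by linarith : (-t) ≠ 0)]
        ring
      rw [e1, e2, neg_le_neg_iff]
      exact Real.rpow_le_rpow (by linarith) (by linarith) hp1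
    · calc |s| ^ (p - 2) * s ≤ 0 :=
            mul_nonpos_of_nonneg_of_nonpos (Real.rpow_nonneg (abs_nonneg s) _) hs
        _ ≤ |t| ^ (p - 2) * t :=
            mul_nonneg (Real.rpow_nonneg (abs_nonneg t) _) ht

/-- `-L` has an order-preserving inverse: `L f ≥ L g` implies `f ≤ g`. -/
theorem stmt9 {V : Type*} [Fintype V] [Nonempty V] (p : ℝ) (hp : 1 < p)
    (A : V → V → Prop) [DecidableRel A] (hA : Symmetric A)
    (ω : V → V → ℝ) (hωsymm : ∀ i j, ω i j = ω j i) (hωpos : ∀ i j, A i j → 0 < ω i j)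
    (μ : V → ℝ) (hμ : ∀ i, 0 < μ i)
    (hconn : ∀ i j : V, Relation.ReflTransGen A i j) (k : V → ℝ) (hk : ∀ i, 0 < k i) (f g : V → ℝ)
    (hfg : ∀ i, pLap p A ω μ g i - k i * g i ≤ pLap p A ω μ f i - k i * f i) :
    ∀ i, f i ≤ g i := by
  obtain ⟨i0, -, hi0⟩ := Finset.exists_max_image Finset.univ (fun i => f i - g i)
    Finset.univ_nonempty
  suffices h : f i0 - g i0 ≤ 0 by
    intro i
    have := hi0 i (Finset.mem_univ i)
    linarith
  by_contra hm
  push_neg at hm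
  have hμ0 := hμ i0
  have key := hfg i0
  have hΔ : pLap p A ω μ f i0 - pLap p A ω μ g i0 ≤ 0 := by
    unfold pLap
    rw [← mul_sub, ← Finset.sum_sub_distrib]
    apply mul_nonpos_of_nonneg_of_nonpos
    · positivity
    apply Finset.sum_nonpos
    intro j _
    split
    · rename_i hAij
      have h1 : f j - f i0 ≤ g j - g i0 := by
        have := hi0 j (Finset.mem_univ j); linarith
      have hφ := phi_mono p hp h1
      have hω := (hωpos i0 j hAij).le
      have := mul_le_mul_of_nonneg_left hφ hω
      nlinarith [this]
    · simp
  have hk0 := hk i0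
  nlinarith [mul_pos hk0 hm]
end

section
/- For any f : V → ℝ, the equation Δ_p u = f̄ - f has a solution u : V → ℝ, where f̄ = (Σ_i μ_i f_i)/(Σ_i μ_i) is the μ-average of f. Moreover any two solutions differ by a constant. -/
open Finset Real

set_option linter.unusedSectionVars false
set_option linter.unusedVariables false
set_option maxHeartbeats 1000000

noncomputable def phi (p t : ℝ) : ℝ := |t| ^ (p - 2) * t

lemma phi_neg (p t : ℝ) : phi p (-t) = - phi p t := by
  simp [phi, abs_neg]

lemma phi_zero (p : ℝ) : phi p 0 = 0 := by simp [phi]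

lemma phi_of_pos {p t : ℝ} (ht : 0 < t) : phi p t = t ^ (p - 1) := by
  rw [phi, abs_of_pos ht, ← Real.rpow_add_one ht.ne']
  ring_nf

lemma phi_of_nonneg {p t : ℝ} (hp : 1 < p) (ht : 0 ≤ t) : phi p t = t ^ (p - 1) := by
  rcases ht.lt_or_eq with h | h
  · exact phi_of_pos h
  · rw [← h, phi_zero, Real.zero_rpow (by linarith)]

lemma phi_strictMono {p : ℝ} (hp : 1 < p) : StrictMono (phi p) := by
  have key : ∀ s t : ℝ, 0 ≤ s → s < t → phi p s < phi p t := by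
    intro s t hs hst
    rw [phi_of_nonneg hp hs, phi_of_nonneg hp (hs.trans hst.le)]
    exact Real.rpow_lt_rpow hs hst (by linarith)
  intro s t hst
  rcases le_or_gt 0 s with hs | hs
  · exact key s t hs hst
  · rcases le_or_gt t 0 with ht | ht
    · have := key (-t) (-s) (by linarith) (by linarith)
      rw [phi_neg, phi_neg] at this
      linarith
    · have h1 : phi p s < 0 :=
        mul_neg_of_pos_of_neg (Real.rpow_pos_of_pos (abs_pos.mpr hs.ne) _) hs
      have h2 : 0 ≤ phi p t := by
        rw [phi_of_nonneg hp ht.le]; positivity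
      linarith

lemma eq_of_edges_const {V : Type*} {A : V → V → Prop} {g : V → ℝ}
    (h : ∀ a b, A a b → g a = g b) {i j : V} (hc : Relation.ReflTransGen A i j) :
    g i = g j := by
  induction hc with
  | refl => rfl
  | tail _ hab ih => exact ih.trans (h _ _ hab)

section Graph

variable {V : Type*} [Fintype V] [Nonempty V] {p : ℝ}
  (A : V → V → Prop) [DecidableRel A] (ω : V → V → ℝ) (μ : V → ℝ)

/-- energy -/
noncomputable def Ene (p : ℝ) (A : V → V → Prop) [DecidableRel A] (ω : V → V → ℝ)
    (v : V → ℝ) : ℝ :=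
  ∑ k, ∑ l, if A k l then ω k l * |v l - v k| ^ p else 0

lemma Ene_nonneg (hωpos : ∀ i j, A i j → 0 < ω i j) (v : V → ℝ) :
    0 ≤ Ene p A ω v := by
  refine Finset.sum_nonneg fun k _ => Finset.sum_nonneg fun l _ => ?_
  split_ifs with h
  · have := hωpos k l h
    positivity
  · exact le_refl _

lemma Ene_smul (hp0 : 0 < p) {c : ℝ} (hc : 0 ≤ c) (v : V → ℝ) :
    Ene p A ω (c • v) = c ^ p * Ene p A ω v := by
  rw [Ene, Ene, Finset.mul_sum]
  refine Finset.sum_congr rfl fun k _ => ?_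
  rw [Finset.mul_sum]
  refine Finset.sum_congr rfl fun l _ => ?_
  split_ifs with h
  · have : |(c • v) l - (c • v) k| = c * |v l - v k| := by
      simp only [Pi.smul_apply, smul_eq_mul, ← mul_sub, abs_mul, abs_of_nonneg hc]
    rw [this, Real.mul_rpow hc (abs_nonneg _)]
    ring
  · ring

lemma Ene_eq_zero (hp0 : 0 < p) (hωpos : ∀ i j, A i j → 0 < ω i j) {v : V → ℝ}
    (hv : Ene p A ω v = 0) : ∀ a b, A a b → v a = v b := by
  intro a b hab
  by_contra hne
  have hterm : 0 < ω a b * |v b - v a| ^ p := by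
    have h1 : 0 < |v b - v a| := abs_pos.mpr (sub_ne_zero.mpr (fun h => hne h.symm))
    have := hωpos a b hab
    positivity
  have hle : ω a b * |v b - v a| ^ p ≤ Ene p A ω v := by
    rw [Ene]
    have h1 : (if A a b then ω a b * |v b - v a| ^ p else 0) ≤
        ∑ l, if A a l then ω a l * |v l - v a| ^ p else 0 := by
      refine Finset.single_le_sum (f := fun l => if A a l then ω a l * |v l - v a| ^ p else 0) (fun l _ => ?_) (Finset.mem_univ b)
      split_ifs with h
      · have := hωpos a l h; positivity
      · exact le_refl _
    rw [if_pos hab] at h1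
    refine h1.trans (Finset.single_le_sum (f := fun k => ∑ l, if A k l then ω k l * |v l - v k| ^ p else 0) (fun k _ => ?_) (Finset.mem_univ a))
    refine Finset.sum_nonneg fun l _ => ?_
    split_ifs with h
    · have := hωpos k l h; positivity
    · exact le_refl _
  rw [hv] at hle
  linarith

noncomputable def linp (μ f v : V → ℝ) : ℝ :=
  ∑ k, μ k * ((∑ j, μ j * f j) / (∑ j, μ j) - f k) * v k

noncomputable def Jf (p : ℝ) (A : V → V → Prop) [DecidableRel A] (ω : V → V → ℝ)
    (μ f : V → ℝ) (v : V → ℝ) : ℝ :=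
  (1 / (2 * p)) * Ene p A ω v + linp μ f v

lemma musum_pos (hμ : ∀ i, 0 < μ i) : 0 < ∑ j, μ j :=
  Finset.sum_pos (fun j _ => hμ j) Finset.univ_nonempty

lemma mean_zero (hμ : ∀ i, 0 < μ i) (f : V → ℝ) :
    ∑ k, μ k * ((∑ j, μ j * f j) / (∑ j, μ j) - f k) = 0 := by
  have h := (musum_pos μ hμ).ne'
  simp only [mul_sub]
  rw [Finset.sum_sub_distrib, ← Finset.sum_mul, mul_div_cancel₀ _ h]
  exact sub_self _

lemma linp_add_const (hμ : ∀ i, 0 < μ i) (f v : V → ℝ) (c : ℝ) :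
    linp μ f (fun k => v k + c) = linp μ f v := by
  have h := mean_zero μ hμ f
  simp only [linp, mul_add]
  rw [Finset.sum_add_distrib, ← Finset.sum_mul, h]
  ring

lemma Jf_add_const (hμ : ∀ i, 0 < μ i) (f v : V → ℝ) (c : ℝ) :
    Jf p A ω μ f (fun k => v k + c) = Jf p A ω μ f v := by
  rw [Jf, Jf, linp_add_const μ hμ f v c]
  congr 2
  rw [Ene, Ene]
  refine Finset.sum_congr rfl fun k _ => Finset.sum_congr rfl fun l _ => ?_
  norm_num

lemma linp_bound (f v : V → ℝ) :
    |linp μ f v| ≤ (∑ k, |μ k * ((∑ j, μ j * f j) / (∑ j, μ j) - f k)|) * ‖v‖ := by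
  rw [linp, Finset.sum_mul]
  refine (Finset.abs_sum_le_sum_abs _ _).trans (Finset.sum_le_sum fun k _ => ?_)
  rw [abs_mul]
  have h : |v k| ≤ ‖v‖ := by
    calc |v k| = ‖v k‖ := rfl
    _ ≤ ‖v‖ := norm_le_pi_norm v k
  exact mul_le_mul_of_nonneg_left h (abs_nonneg _)

lemma continuous_abs_rpow (hp0 : 0 < p) : Continuous fun x : ℝ => |x| ^ p := by
  rw [continuous_iff_continuousAt]
  intro x
  exact (Real.continuousAt_rpow_const _ p (Or.inr hp0.le)).comp continuous_abs.continuousAt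

lemma continuous_Ene (hp0 : 0 < p) : Continuous (Ene p A ω) := by
  refine continuous_finset_sum _ fun k _ => continuous_finset_sum _ fun l _ => ?_
  by_cases h : A k l
  · simp only [if_pos h]
    exact continuous_const.mul
      ((continuous_abs_rpow hp0).comp ((continuous_apply l).sub (continuous_apply k)))
  · simp only [if_neg h]
    exact continuous_const

lemma continuous_linp (f : V → ℝ) : Continuous (linp μ f) :=
  continuous_finset_sum _ fun k _ => continuous_const.mul (continuous_apply k)

lemma continuous_Jf (hp0 : 0 < p) (f : V → ℝ) : Continuous (Jf p A ω μ f) :=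
  (continuous_const.mul (continuous_Ene A ω hp0)).add (continuous_linp μ f)

lemma Ene_zero_of (hp0 : 0 < p) : Ene p A ω (0 : V → ℝ) = 0 := by
  rw [Ene]
  refine Finset.sum_eq_zero fun k _ => Finset.sum_eq_zero fun l _ => ?_
  split_ifs with h
  · simp [Real.zero_rpow hp0.ne']
  · rfl

lemma Jf_zero (hp0 : 0 < p) (f : V → ℝ) : Jf p A ω μ f (0 : V → ℝ) = 0 := by
  rw [Jf, Ene_zero_of A ω hp0, linp]
  simp

lemma exists_eps (hp : 1 < p) (hωpos : ∀ i j, A i j → 0 < ω i j)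
    (hμ : ∀ i, 0 < μ i) (hconn : ∀ i j : V, Relation.ReflTransGen A i j) :
    ∃ ε > 0, ∀ v : V → ℝ, (∑ k, μ k * v k = 0) → ε * ‖v‖ ^ p ≤ Ene p A ω v := by
  have hp0 : (0 : ℝ) < p := by linarith
  -- key: mean zero & energy zero imply v = 0
  have hkey : ∀ v : V → ℝ, (∑ k, μ k * v k = 0) → Ene p A ω v = 0 → v = 0 := by
    intro v hm hE
    have hconst := Ene_eq_zero A ω hp0 hωpos hE
    obtain ⟨i0⟩ := (inferInstance : Nonempty V)
    have hcv : ∀ j, v j = v i0 := fun j => (eq_of_edges_const hconst (hconn j i0))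
    have : ∑ k, μ k * v k = (∑ k, μ k) * v i0 := by
      rw [Finset.sum_mul]
      exact Finset.sum_congr rfl fun k _ => by rw [hcv k]
    rw [this] at hm
    have hv0 : v i0 = 0 := by
      rcases mul_eq_zero.mp hm with h | h
      · exact absurd h (musum_pos μ hμ).ne'
      · exact h
    funext j
    rw [Pi.zero_apply, hcv j, hv0]
  set Sp : Set (V → ℝ) := {w | (∑ k, μ k * w k = 0) ∧ ‖w‖ = 1} with hSp
  by_cases hne : Sp.Nonempty
  · -- compactness
    have hclosed : IsClosed Sp := by
      refine IsClosed.inter ?_ ?_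
      · exact isClosed_eq (continuous_finset_sum _ fun k _ =>
          continuous_const.mul (continuous_apply k)) continuous_const
      · exact isClosed_eq continuous_norm continuous_const
    have hbdd : Bornology.IsBounded Sp := by
      refine (Metric.isBounded_closedBall (x := (0 : V → ℝ)) (r := 1)).subset ?_
      intro w hw
      rw [Metric.mem_closedBall, dist_zero_right, hw.2]
    have hcpt : IsCompact Sp := Metric.isCompact_of_isClosed_isBounded hclosed hbdd
    obtain ⟨w0, hw0, hmin⟩ := hcpt.exists_isMinOn hne (continuous_Ene A ω hp0).continuousOn
    have hε : 0 < Ene p A ω w0 := by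
      rcases (Ene_nonneg A ω hωpos w0).lt_or_eq with h | h
      · exact h
      · exfalso
        have hz := hkey w0 hw0.1 h.symm
        have h2 : ‖w0‖ = 1 := hw0.2
        rw [hz, norm_zero] at h2
        exact one_ne_zero h2.symm
    refine ⟨Ene p A ω w0, hε, fun v hv => ?_⟩
    by_cases hvz : v = 0
    · rw [hvz, norm_zero, Real.zero_rpow hp0.ne', mul_zero]
      exact Ene_nonneg A ω hωpos 0
    · have hnv : 0 < ‖v‖ := norm_pos_iff.mpr hvz
      set w : V → ℝ := ‖v‖⁻¹ • v with hw
      have hwSp : w ∈ Sp := by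
        constructor
        · rw [hw]
          simp only [Pi.smul_apply, smul_eq_mul]
          have : ∑ k, μ k * (‖v‖⁻¹ * v k) = ‖v‖⁻¹ * ∑ k, μ k * v k := by
            rw [Finset.mul_sum]; exact Finset.sum_congr rfl fun k _ => by ring
          rw [this, hv, mul_zero]
        · rw [hw, norm_smul, norm_inv, norm_norm, inv_mul_cancel₀ hnv.ne']
      have hvw : v = ‖v‖ • w := by
        rw [hw, smul_smul, mul_inv_cancel₀ hnv.ne', one_smul]
      calc Ene p A ω w0 * ‖v‖ ^ p ≤ Ene p A ω w * ‖v‖ ^ p := by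
            have := hmin hwSp
            have hnn : (0:ℝ) ≤ ‖v‖ ^ p := by positivity
            exact mul_le_mul_of_nonneg_right this hnn
        _ = Ene p A ω v := by
            conv_rhs => rw [hvw]
            rw [Ene_smul A ω hp0 (norm_nonneg v)]
            ring
  · refine ⟨1, one_pos, fun v hv => ?_⟩
    have hvz : v = 0 := by
      by_contra hvz
      have hnv : 0 < ‖v‖ := norm_pos_iff.mpr hvz
      refine hne ⟨‖v‖⁻¹ • v, ?_, ?_⟩
      · simp only [Pi.smul_apply, smul_eq_mul]
        have : ∑ k, μ k * (‖v‖⁻¹ * v k) = ‖v‖⁻¹ * ∑ k, μ k * v k := by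
          rw [Finset.mul_sum]; exact Finset.sum_congr rfl fun k _ => by ring
        rw [this, hv, mul_zero]
      · rw [norm_smul, norm_inv, norm_norm, inv_mul_cancel₀ hnv.ne']
    rw [hvz, norm_zero, Real.zero_rpow hp0.ne', mul_zero]
    exact Ene_nonneg A ω hωpos 0

lemma exists_global_min (hp : 1 < p) (hωpos : ∀ i j, A i j → 0 < ω i j)
    (hμ : ∀ i, 0 < μ i) (hconn : ∀ i j : V, Relation.ReflTransGen A i j) (f : V → ℝ) :
    ∃ u : V → ℝ, ∀ v : V → ℝ, Jf p A ω μ f u ≤ Jf p A ω μ f v := by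
  have hp0 : (0 : ℝ) < p := by linarith
  obtain ⟨ε, hε, hcoerc⟩ := exists_eps A ω μ hp hωpos hμ hconn
  set C : ℝ := ∑ k, |μ k * ((∑ j, μ j * f j) / (∑ j, μ j) - f k)| with hC
  have hC0 : 0 ≤ C := Finset.sum_nonneg fun k _ => abs_nonneg _
  set R : ℝ := max 1 ((2 * p * C / ε) ^ ((p - 1)⁻¹)) with hR
  set S₀ : Set (V → ℝ) := {v | (∑ k, μ k * v k = 0) ∧ Jf p A ω μ f v ≤ 0} with hS₀
  have hmem0 : (0 : V → ℝ) ∈ S₀ := by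
    constructor
    · simp
    · rw [Jf_zero A ω μ hp0 f]
  have hclosed : IsClosed S₀ := by
    refine IsClosed.inter ?_ ?_
    · exact isClosed_eq (continuous_finset_sum _ fun k _ =>
        continuous_const.mul (continuous_apply k)) continuous_const
    · exact isClosed_le (continuous_Jf A ω μ hp0 f) continuous_const
  have hbdd : Bornology.IsBounded S₀ := by
    refine (Metric.isBounded_closedBall (x := (0 : V → ℝ)) (r := R)).subset ?_
    intro v hv
    rw [Metric.mem_closedBall, dist_zero_right]
    -- from Jf v ≤ 0 derive bound
    have h1 : (1 / (2 * p)) * Ene p A ω v ≤ C * ‖v‖ := by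
      have h2 := hv.2
      rw [Jf] at h2
      have h3 : -linp μ f v ≤ |linp μ f v| := neg_le_abs _
      have h4 := linp_bound μ f v
      linarith
    have h5 : ε * ‖v‖ ^ p ≤ 2 * p * C * ‖v‖ := by
      have h6 := hcoerc v hv.1
      have h7 : ε * ‖v‖ ^ p ≤ 2 * p * ((1 / (2 * p)) * Ene p A ω v) := by
        rw [← mul_assoc]
        have : 2 * p * (1 / (2 * p)) = 1 := by field_simp
        rw [this, one_mul]
        exact h6
      calc ε * ‖v‖ ^ p ≤ 2 * p * ((1 / (2 * p)) * Ene p A ω v) := h7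
        _ ≤ 2 * p * (C * ‖v‖) := by nlinarith
        _ = 2 * p * C * ‖v‖ := by ring
    by_cases hle : ‖v‖ ≤ 1
    · exact hle.trans (le_max_left _ _)
    · push_neg at hle
      have hN : (0:ℝ) < ‖v‖ := by linarith
      have hsplit : ‖v‖ ^ p = ‖v‖ ^ (p - 1) * ‖v‖ := by
        rw [← Real.rpow_add_one hN.ne' (p - 1)]
        norm_num
      have h8 : ε * ‖v‖ ^ (p - 1) ≤ 2 * p * C := by
        rw [hsplit] at h5
        have := le_of_mul_le_mul_right (by linarith : ε * ‖v‖ ^ (p - 1) * ‖v‖ ≤ 2 * p * C * ‖v‖) hN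
        exact this
      have h9 : ‖v‖ ^ (p - 1) ≤ 2 * p * C / ε := (le_div_iff₀' hε).mpr (by linarith)
      have h10 : ‖v‖ = (‖v‖ ^ (p - 1)) ^ ((p - 1)⁻¹) :=
        (Real.rpow_rpow_inv (norm_nonneg v) (by linarith : p - 1 ≠ 0)).symm
      rw [h10]
      refine le_trans ?_ (le_max_right _ _)
      exact Real.rpow_le_rpow (by positivity) h9 (inv_nonneg.mpr (by linarith))
  have hcpt : IsCompact S₀ := Metric.isCompact_of_isClosed_isBounded hclosed hbdd
  obtain ⟨u, huS, hmin⟩ := hcpt.exists_isMinOn ⟨0, hmem0⟩ (continuous_Jf A ω μ hp0 f).continuousOn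
  refine ⟨u, fun v => ?_⟩
  -- first reduce to mean-zero
  set c : ℝ := (∑ k, μ k * v k) / (∑ k, μ k) with hc
  set v0 : V → ℝ := fun k => v k - c with hv0
  have hveq : Jf p A ω μ f v = Jf p A ω μ f v0 := by
    have : v = fun k => v0 k + c := by funext k; simp [hv0]
    rw [this, Jf_add_const A ω μ hμ f v0 c]
  have hv0mean : ∑ k, μ k * v0 k = 0 := by
    simp only [hv0, mul_sub]
    rw [Finset.sum_sub_distrib, ← Finset.sum_mul]
    rw [mul_comm, hc, div_mul_cancel₀ _ (musum_pos μ hμ).ne']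
    exact sub_self _
  rw [hveq]
  by_cases hJ : Jf p A ω μ f v0 ≤ 0
  · exact hmin ⟨hv0mean, hJ⟩
  · push_neg at hJ
    have h0 : Jf p A ω μ f u ≤ Jf p A ω μ f 0 := hmin hmem0
    rw [Jf_zero A ω μ hp0 f] at h0
    linarith

noncomputable def Sv (p : ℝ) (A : V → V → Prop) [DecidableRel A] (ω : V → V → ℝ)
    (v : V → ℝ) (i : V) : ℝ :=
  ∑ j, if A i j then ω i j * phi p (v j - v i) else 0

lemma sum_parts (hA : Symmetric A) (hωsymm : ∀ i j, ω i j = ω j i)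
    (F : V → V → ℝ) (hFodd : ∀ k l, F l k = -F k l) (g : V → ℝ) :
    ∑ k, ∑ l, (if A k l then ω k l * F k l * (g l - g k) else 0)
      = -2 * ∑ k, (∑ l, if A k l then ω k l * F k l else 0) * g k := by
  have hsplit : ∀ k l : V, (if A k l then ω k l * F k l * (g l - g k) else 0)
      = (if A k l then ω k l * F k l * g l else 0) - (if A k l then ω k l * F k l else 0) * g k := by
    intro k l; split_ifs with h <;> ring
  have h1 : ∑ k, ∑ l, (if A k l then ω k l * F k l * (g l - g k) else 0)
      = (∑ k, ∑ l, (if A k l then ω k l * F k l * g l else 0))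
        - ∑ k, (∑ l, if A k l then ω k l * F k l else 0) * g k := by
    rw [← Finset.sum_sub_distrib]
    refine Finset.sum_congr rfl fun k _ => ?_
    rw [Finset.sum_mul, ← Finset.sum_sub_distrib]
    exact Finset.sum_congr rfl fun l _ => hsplit k l
  have h2 : ∑ k, ∑ l, (if A k l then ω k l * F k l * g l else 0)
      = - ∑ k, (∑ l, if A k l then ω k l * F k l else 0) * g k := by
    rw [Finset.sum_comm]
    rw [← Finset.sum_neg_distrib]
    refine Finset.sum_congr rfl fun a _ => ?_
    rw [Finset.sum_mul, ← Finset.sum_neg_distrib]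
    refine Finset.sum_congr rfl fun b _ => ?_
    have hiff : A b a ↔ A a b := ⟨fun h => hA h, fun h => hA h⟩
    rw [if_congr hiff rfl rfl]
    split_ifs with h
    · rw [hωsymm b a, hFodd b a]; ring
    · ring
  rw [h1, h2]
  ring

lemma base_deriv (hp : 1 < p) (a b : ℝ) :
    HasDerivAt (fun t : ℝ => |a + t * b| ^ p) (p * phi p a * b) 0 := by
  have h1 : HasDerivAt (fun t : ℝ => a + t * b) b 0 := by
    simpa using ((hasDerivAt_id (0:ℝ)).mul_const b).const_add a
  have h2 := hasDerivAt_abs_rpow (a + 0 * b) hp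
  have h3 := h2.comp 0 h1
  refine h3.congr_deriv ?_
  rw [show a + 0 * b = a from by ring, phi]
  ring

lemma EL (hp : 1 < p) (hA : Symmetric A) (hωsymm : ∀ i j, ω i j = ω j i)
    (hμ : ∀ i, 0 < μ i) (f u : V → ℝ)
    (hmin : ∀ v : V → ℝ, Jf p A ω μ f u ≤ Jf p A ω μ f v) (i : V) :
    Sv p A ω u i = μ i * ((∑ j, μ j * f j) / (∑ j, μ j) - f i) := by
  classical
  have hp0 : (0 : ℝ) < p := by linarith
  set fb : ℝ := (∑ j, μ j * f j) / (∑ j, μ j) with hfb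
  set d : V → ℝ := fun k => if k = i then 1 else 0 with hd
  -- derivative of the energy part
  set E' : ℝ := ∑ k, ∑ l, (if A k l then ω k l * (p * phi p (u l - u k)) * (d l - d k) else 0)
    with hE'
  have hE : HasDerivAt (fun t : ℝ => ∑ k, ∑ l,
      if A k l then ω k l * |(u l + t * d l) - (u k + t * d k)| ^ p else 0) E' 0 := by
    rw [hE']
    refine HasDerivAt.fun_sum fun k _ => HasDerivAt.fun_sum fun l _ => ?_
    by_cases h : A k l
    · simp only [if_pos h]
      have heq : (fun t : ℝ => ω k l * |(u l + t * d l) - (u k + t * d k)| ^ p)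
          = fun t : ℝ => ω k l * |(u l - u k) + t * (d l - d k)| ^ p := by
        funext t
        rw [show (u l + t * d l) - (u k + t * d k) = (u l - u k) + t * (d l - d k) by ring]
      have h4 := (base_deriv hp (u l - u k) (d l - d k)).const_mul (ω k l)
      rw [← heq] at h4
      refine h4.congr_deriv ?_
      ring
    · simp only [if_neg h]
      exact hasDerivAt_const 0 0
  -- derivative of the linear part
  have hL : HasDerivAt (fun t : ℝ => ∑ k, μ k * (fb - f k) * (u k + t * d k))
      (∑ k, μ k * (fb - f k) * d k) 0 := by
    refine HasDerivAt.fun_sum fun k _ => ?_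
    have h1 : HasDerivAt (fun t : ℝ => u k + t * d k) (d k) 0 := by
      simpa using ((hasDerivAt_id (0:ℝ)).mul_const (d k)).const_add (u k)
    simpa using h1.const_mul (μ k * (fb - f k))
  have hg : HasDerivAt (fun t : ℝ => Jf p A ω μ f (fun k => u k + t * d k))
      ((1 / (2 * p)) * E' + ∑ k, μ k * (fb - f k) * d k) 0 :=
    (hE.const_mul (1 / (2 * p))).add hL
  have hloc : IsLocalMin (fun t : ℝ => Jf p A ω μ f (fun k => u k + t * d k)) 0 := by
    refine Filter.Eventually.of_forall fun t => ?_
    have h0 : (fun k => u k + (0:ℝ) * d k) = u := by funext k; ring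
    simp only [h0]
    exact hmin _
  have hD := hloc.hasDerivAt_eq_zero hg
  -- compute E'
  have hE'val : E' = -2 * (p * Sv p A ω u i) := by
    rw [hE', sum_parts A ω hA hωsymm (fun k l => p * phi p (u l - u k))
      (fun k l => by
        show p * phi p (u k - u l) = -(p * phi p (u l - u k))
        rw [show u k - u l = -(u l - u k) from by ring, phi_neg]; ring) d]
    have hpick : ∀ k : V, (∑ l, if A k l then ω k l * (p * phi p (u l - u k)) else 0) * d k
        = if k = i then (∑ l, if A i l then ω i l * (p * phi p (u l - u i)) else 0) else 0 := by
      intro k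
      rw [hd]
      by_cases h : k = i
      · subst h; simp
      · simp [h]
    rw [Finset.sum_congr rfl fun k _ => hpick k, Finset.sum_ite_eq' Finset.univ i, if_pos (Finset.mem_univ i)]
    have : (∑ l, if A i l then ω i l * (p * phi p (u l - u i)) else 0) = p * Sv p A ω u i := by
      rw [Sv, Finset.mul_sum]
      refine Finset.sum_congr rfl fun l _ => ?_
      split_ifs with h <;> ring
    rw [this]
  -- compute linear part
  have hLval : (∑ k, μ k * (fb - f k) * d k) = μ i * (fb - f i) := by
    have : ∀ k : V, μ k * (fb - f k) * d k = if k = i then μ i * (fb - f i) else 0 := by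
      intro k
      rw [hd]
      by_cases h : k = i
      · subst h; simp
      · simp [h]
    rw [Finset.sum_congr rfl fun k _ => this k, Finset.sum_ite_eq' Finset.univ i, if_pos (Finset.mem_univ i)]
  rw [hE'val, hLval] at hD
  have hpne : (2 : ℝ) * p ≠ 0 := by positivity
  field_simp at hD
  have h2 : (2 * p) * Sv p A ω u i = (2 * p) * (μ i * (fb - f i)) := by rw [show Sv p A ω u i = μ i * (fb - f i) by linarith]
  exact mul_left_cancel₀ hpne h2

lemma unique_mod_const (hp : 1 < p) (hA : Symmetric A) (hωsymm : ∀ i j, ω i j = ω j i)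
    (hωpos : ∀ i j, A i j → 0 < ω i j)
    (hconn : ∀ i j : V, Relation.ReflTransGen A i j) (u u' : V → ℝ)
    (hS : ∀ i, Sv p A ω u i = Sv p A ω u' i) :
    ∃ c : ℝ, ∀ i, u' i = u i + c := by
  classical
  set w : V → ℝ := fun k => u' k - u k with hw
  have hsplit : ∀ k l : V,
      (if A k l then ω k l * (phi p (u' l - u' k) - phi p (u l - u k)) * (w l - w k) else 0)
      = (if A k l then ω k l * (phi p (u' l - u' k)) * (w l - w k) else 0)
        - (if A k l then ω k l * (phi p (u l - u k)) * (w l - w k) else 0) := by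
    intro k l; split_ifs with h <;> ring
  have hQ : ∑ k, ∑ l,
      (if A k l then ω k l * (phi p (u' l - u' k) - phi p (u l - u k)) * (w l - w k) else 0)
      = 0 := by
    have h1 : ∑ k, ∑ l,
        (if A k l then ω k l * (phi p (u' l - u' k) - phi p (u l - u k)) * (w l - w k) else 0)
        = (∑ k, ∑ l, (if A k l then ω k l * (phi p (u' l - u' k)) * (w l - w k) else 0))
          - ∑ k, ∑ l, (if A k l then ω k l * (phi p (u l - u k)) * (w l - w k) else 0) := by
      rw [← Finset.sum_sub_distrib]
      refine Finset.sum_congr rfl fun k _ => ?_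
      rw [← Finset.sum_sub_distrib]
      exact Finset.sum_congr rfl fun l _ => hsplit k l
    rw [h1,
      sum_parts A ω hA hωsymm (fun k l => phi p (u' l - u' k))
        (fun k l => by
          show phi p (u' k - u' l) = -(phi p (u' l - u' k))
          rw [show u' k - u' l = -(u' l - u' k) from by ring, phi_neg]) w,
      sum_parts A ω hA hωsymm (fun k l => phi p (u l - u k))
        (fun k l => by
          show phi p (u k - u l) = -(phi p (u l - u k))
          rw [show u k - u l = -(u l - u k) from by ring, phi_neg]) w]
    have : ∀ k : V, (∑ l, if A k l then ω k l * phi p (u' l - u' k) else 0) * w k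
        = (∑ l, if A k l then ω k l * phi p (u l - u k) else 0) * w k := by
      intro k
      have h2 : (∑ l, if A k l then ω k l * phi p (u' l - u' k) else 0) = Sv p A ω u' k := rfl
      have h3 : (∑ l, if A k l then ω k l * phi p (u l - u k) else 0) = Sv p A ω u k := rfl
      rw [h2, h3, hS k]
    rw [Finset.sum_congr rfl fun k _ => this k]
    ring
  have hnonneg : ∀ k ∈ Finset.univ, ∀ l ∈ Finset.univ,
      0 ≤ (if A k l then ω k l * (phi p (u' l - u' k) - phi p (u l - u k)) * (w l - w k) else 0) := by
    intro k _ l _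
    split_ifs with h
    · have hww : w l - w k = (u' l - u' k) - (u l - u k) := by rw [hw]; ring
      rw [hww]
      rw [mul_assoc]
      refine mul_nonneg (hωpos k l h).le ?_
      rcases le_total (u l - u k) (u' l - u' k) with hle | hle
      · exact mul_nonneg (sub_nonneg.mpr ((phi_strictMono hp).monotone hle))
          (sub_nonneg.mpr hle)
      · have h1 := sub_nonpos.mpr ((phi_strictMono hp).monotone hle)
        have h2 := sub_nonpos.mpr hle
        nlinarith
    · exact le_refl _
  have houter := (Finset.sum_eq_zero_iff_of_nonneg
    (fun k hk => Finset.sum_nonneg fun l hl => hnonneg k hk l hl)).mp hQ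
  have hconst : ∀ a b : V, A a b → w a = w b := by
    intro a b hab
    have hinner := (Finset.sum_eq_zero_iff_of_nonneg
      (fun l hl => hnonneg a (Finset.mem_univ a) l hl)).mp
      (houter a (Finset.mem_univ a)) b (Finset.mem_univ b)
    rw [if_pos hab] at hinner
    have hww2 : w b - w a = (u' b - u' a) - (u b - u a) := by rw [hw]; ring
    rw [hww2, mul_assoc] at hinner
    have h4 : (phi p (u' b - u' a) - phi p (u b - u a)) * ((u' b - u' a) - (u b - u a)) = 0 := by
      rcases mul_eq_zero.mp hinner with h | h
      · exact absurd h (hωpos a b hab).ne'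
      · exact h
    have h5 : u' b - u' a = u b - u a := by
      by_contra hne
      rcases lt_or_gt_of_ne hne with hlt | hlt
      · have := phi_strictMono hp hlt
        nlinarith
      · have := phi_strictMono hp hlt
        nlinarith
    have h6 : w b - w a = 0 := by rw [hww2, h5]; ring
    linarith
  obtain ⟨i0⟩ := (inferInstance : Nonempty V)
  refine ⟨w i0, fun i => ?_⟩
  have h7 : w i = w i0 := eq_of_edges_const hconst (hconn i i0)
  have hwi : w i = u' i - u i := rfl
  linarith

lemma pLap_eq_Sv (v : V → ℝ) (i : V) : pLap p A ω μ v i = (1 / μ i) * Sv p A ω v i := by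
  rw [pLap, Sv]
  congr 1
  refine Finset.sum_congr rfl fun j _ => ?_
  split_ifs with h
  · rw [phi]; ring
  · rfl

end Graph


/-- `Δ_p u = f̄ - f` has a solution, unique up to an additive constant. -/
theorem stmt10 {V : Type*} [Fintype V] [Nonempty V] (p : ℝ) (hp : 1 < p)
    (A : V → V → Prop) [DecidableRel A] (hA : Symmetric A)
    (ω : V → V → ℝ) (hωsymm : ∀ i j, ω i j = ω j i) (hωpos : ∀ i j, A i j → 0 < ω i j)
    (μ : V → ℝ) (hμ : ∀ i, 0 < μ i)
    (hconn : ∀ i j : V, Relation.ReflTransGen A i j) (f : V → ℝ) :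
    ∃ u : V → ℝ, (∀ i, pLap p A ω μ u i = (∑ j, μ j * f j) / (∑ j, μ j) - f i) ∧
      ∀ u' : V → ℝ, (∀ i, pLap p A ω μ u' i = (∑ j, μ j * f j) / (∑ j, μ j) - f i) →
        ∃ c : ℝ, ∀ i, u' i = u i + c := by
  obtain ⟨u, hmin⟩ := exists_global_min A ω μ hp hωpos hμ hconn f
  have hEL := EL A ω μ hp hA hωsymm hμ f u hmin
  refine ⟨u, fun i => ?_, fun u' hu' => ?_⟩
  · rw [pLap_eq_Sv A ω μ u i, hEL i, one_div, inv_mul_cancel_left₀ (hμ i).ne']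
  · refine unique_mod_const A ω hp hA hωsymm hωpos hconn u u' fun i => ?_
    have h2 : (1 / μ i) * Sv p A ω u' i = (∑ j, μ j * f j) / (∑ j, μ j) - f i := by
      rw [← pLap_eq_Sv A ω μ u' i]; exact hu' i
    have h3 : Sv p A ω u' i = μ i * ((∑ j, μ j * f j) / (∑ j, μ j) - f i) := by
      rw [← h2, one_div, mul_inv_cancel_left₀ (hμ i).ne']
    rw [hEL i, h3]
end
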